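/- In ℝ^d with the sup norm (d ≥ 2), the set consisting of the 2d−1 vectors x_i = 2e_i + e_d and x_{i+d−1} = −2e_i + e_d for i = 1, ..., d−1, together with x_{2d−1} = −3e_d, is an M-set; hence m(ℓ_∞^d) = 2d−1. -/
import Mathlib

def IsMSet (X : Type*) [NormedAddCommGroup X] (S : Set X) : Prop :=
  (∀ x ∈ S, 1 < ‖x‖) ∧ ∀ x ∈ S, ∀ y ∈ S, x ≠ y → ‖x + y‖ = 2

/-- The standard basis vector `e i` of `ℝ^d`. -/
def stdBasis (d : ℕ) (i : Fin d) : Fin d → ℝ := Pi.single i (1 : ℝ)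


lemma aux_norm_eq_two {d : ℕ} (v : Fin d → ℝ) (h1 : ∀ k, |v k| ≤ 2)
    (h2 : ∃ k, |v k| = 2) : ‖v‖ = 2 := by
  obtain ⟨k, hk⟩ := h2
  refine le_antisymm (pi_norm_le_iff_of_nonneg (by norm_num) |>.2 fun i => ?_) ?_
  · simpa [Real.norm_eq_abs] using h1 i
  · calc (2:ℝ) = ‖v k‖ := by simp [Real.norm_eq_abs, hk]
      _ ≤ ‖v‖ := norm_le_pi_norm v k

lemma aux_one_lt_norm {d : ℕ} (v : Fin d → ℝ) (k : Fin d) (h : 1 < |v k|) : 1 < ‖v‖ :=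
  lt_of_lt_of_le (by simpa [Real.norm_eq_abs] using h) (norm_le_pi_norm v k)

lemma sum_norm_ij {d : ℕ} (a b : ℝ) (ha : |a| ≤ 2) (hb : |b| ≤ 2)
    (i j l : Fin d) (hij : i ≠ j) (hil : i ≠ l) (hjl : j ≠ l) :
    ‖(a • stdBasis d i + stdBasis d l) + (b • stdBasis d j + stdBasis d l)‖ = 2 := by
  apply aux_norm_eq_two
  · intro k
    simp only [stdBasis, Pi.add_apply, Pi.smul_apply, Pi.single_apply, smul_eq_mul]
    rcases eq_or_ne k i with rfl | hki <;> rcases eq_or_ne k j with rfl | hkj <;>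
      rcases eq_or_ne k l with rfl | hkl <;> simp_all <;> norm_num
  · refine ⟨l, ?_⟩
    simp only [stdBasis, Pi.add_apply, Pi.smul_apply, Pi.single_apply, smul_eq_mul]
    rw [if_neg (Ne.symm hil), if_neg (Ne.symm hjl)]
    norm_num

lemma sum_norm_ii {d : ℕ} (i l : Fin d) (hil : i ≠ l) :
    ‖((2:ℝ) • stdBasis d i + stdBasis d l) + ((-2:ℝ) • stdBasis d i + stdBasis d l)‖ = 2 := by
  apply aux_norm_eq_two
  · intro k
    simp only [stdBasis, Pi.add_apply, Pi.smul_apply, Pi.single_apply, smul_eq_mul]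
    rcases eq_or_ne k i with rfl | hki <;> rcases eq_or_ne k l with rfl | hkl <;>
      simp_all <;> norm_num
  · refine ⟨l, ?_⟩
    simp only [stdBasis, Pi.add_apply, Pi.smul_apply, Pi.single_apply, smul_eq_mul]
    rw [if_neg (Ne.symm hil)]
    norm_num

lemma sum_norm_iz {d : ℕ} (a : ℝ) (ha : |a| ≤ 2) (i l : Fin d) (hil : i ≠ l) :
    ‖(a • stdBasis d i + stdBasis d l) + (-3:ℝ) • stdBasis d l‖ = 2 := by
  apply aux_norm_eq_two
  · intro k
    simp only [stdBasis, Pi.add_apply, Pi.smul_apply, Pi.single_apply, smul_eq_mul]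
    rcases eq_or_ne k i with rfl | hki <;> rcases eq_or_ne k l with rfl | hkl <;>
      simp_all <;> norm_num
  · refine ⟨l, ?_⟩
    simp only [stdBasis, Pi.add_apply, Pi.smul_apply, Pi.single_apply, smul_eq_mul]
    rw [if_neg (Ne.symm hil)]
    norm_num

lemma main_aux (d : ℕ) (hd : 2 ≤ d) (l : Fin d) (hl : (l : ℕ) = d - 1) :
    IsMSet (Fin d → ℝ)
      {x | (∃ i : Fin d, (i : ℕ) < d - 1 ∧ x = (2 : ℝ) • stdBasis d i + stdBasis d l) ∨
           (∃ i : Fin d, (i : ℕ) < d - 1 ∧ x = (-2 : ℝ) • stdBasis d i + stdBasis d l) ∨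
           x = (-3 : ℝ) • stdBasis d l} ∧
    ({x | (∃ i : Fin d, (i : ℕ) < d - 1 ∧ x = (2 : ℝ) • stdBasis d i + stdBasis d l) ∨
           (∃ i : Fin d, (i : ℕ) < d - 1 ∧ x = (-2 : ℝ) • stdBasis d i + stdBasis d l) ∨
           x = (-3 : ℝ) • stdBasis d l} : Set (Fin d → ℝ)).ncard = 2 * d - 1 := by
  have hil : ∀ i : Fin d, (i : ℕ) < d - 1 → i ≠ l := by
    intro i hi h
    rw [h, hl] at hi
    omega
  constructor
  · constructor
    · rintro x (⟨i, hi, rfl⟩ | ⟨i, hi, rfl⟩ | rfl)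
      · apply aux_one_lt_norm _ i
        simp only [stdBasis, Pi.add_apply, Pi.smul_apply, Pi.single_apply, smul_eq_mul]
        rw [if_neg (hil i hi)]
        norm_num
      · apply aux_one_lt_norm _ i
        simp only [stdBasis, Pi.add_apply, Pi.smul_apply, Pi.single_apply, smul_eq_mul]
        rw [if_neg (hil i hi)]
        norm_num
      · apply aux_one_lt_norm _ l
        simp only [stdBasis, Pi.smul_apply, Pi.single_apply, smul_eq_mul]
        norm_num
    · rintro x (⟨i, hi, rfl⟩ | ⟨i, hi, rfl⟩ | rfl) y (⟨j, hj, rfl⟩ | ⟨j, hj, rfl⟩ | rfl) hxy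
      · rcases eq_or_ne i j with rfl | hij
        · exact absurd rfl hxy
        · exact sum_norm_ij 2 2 (by norm_num) (by norm_num) i j l hij (hil i hi) (hil j hj)
      · rcases eq_or_ne i j with rfl | hij
        · exact sum_norm_ii i l (hil i hi)
        · exact sum_norm_ij 2 (-2) (by norm_num) (by norm_num) i j l hij (hil i hi) (hil j hj)
      · exact sum_norm_iz 2 (by norm_num) i l (hil i hi)
      · rcases eq_or_ne i j with rfl | hij
        · rw [add_comm]; exact sum_norm_ii i l (hil i hi)
        · exact sum_norm_ij (-2) 2 (by norm_num) (by norm_num) i j l hij (hil i hi) (hil j hj)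
      · rcases eq_or_ne i j with rfl | hij
        · exact absurd rfl hxy
        · exact sum_norm_ij (-2) (-2) (by norm_num) (by norm_num) i j l hij (hil i hi) (hil j hj)
      · exact sum_norm_iz (-2) (by norm_num) i l (hil i hi)
      · rw [add_comm]; exact sum_norm_iz 2 (by norm_num) j l (hil j hj)
      · rw [add_comm]; exact sum_norm_iz (-2) (by norm_num) j l (hil j hj)
      · exact absurd rfl hxy
  · -- cardinality
    have hle : d - 1 ≤ d := by omega
    set f1 : Fin (d-1) → (Fin d → ℝ) :=
      fun i => (2:ℝ) • stdBasis d (Fin.castLE hle i) + stdBasis d l with hf1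
    set f2 : Fin (d-1) → (Fin d → ℝ) :=
      fun i => (-2:ℝ) • stdBasis d (Fin.castLE hle i) + stdBasis d l with hf2
    set z : Fin d → ℝ := (-3:ℝ) • stdBasis d l with hz
    have hcl : ∀ i : Fin (d-1), (Fin.castLE hle i) ≠ l := by
      intro i
      apply hil
      simpa using i.isLt
    have ev : ∀ (a : ℝ) (i k : Fin d),
        ((a • stdBasis d i + stdBasis d l) k) =
          a * (if k = i then 1 else 0) + (if k = l then 1 else 0) := by
      intro a i k
      simp [stdBasis, Pi.single_apply]
    have hSeq : {x | (∃ i : Fin d, (i : ℕ) < d - 1 ∧ x = (2 : ℝ) • stdBasis d i + stdBasis d l) ∨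
           (∃ i : Fin d, (i : ℕ) < d - 1 ∧ x = (-2 : ℝ) • stdBasis d i + stdBasis d l) ∨
           x = (-3 : ℝ) • stdBasis d l} = (Set.range f1 ∪ Set.range f2) ∪ {z} := by
      ext x
      simp only [Set.mem_setOf_eq, Set.mem_union, Set.mem_range, Set.mem_singleton_iff]
      constructor
      · rintro (⟨i, hi, rfl⟩ | ⟨i, hi, rfl⟩ | rfl)
        · refine Or.inl (Or.inl ⟨⟨(i:ℕ), hi⟩, ?_⟩)
          rw [hf1]
          congr 1
        · refine Or.inl (Or.inr ⟨⟨(i:ℕ), hi⟩, ?_⟩)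
          rw [hf2]
          congr 1
        · exact Or.inr rfl
      · rintro ((⟨i, rfl⟩ | ⟨i, rfl⟩) | rfl)
        · exact Or.inl ⟨Fin.castLE hle i, by simpa using i.isLt, rfl⟩
        · exact Or.inr (Or.inl ⟨Fin.castLE hle i, by simpa using i.isLt, rfl⟩)
        · exact Or.inr (Or.inr rfl)
    rw [hSeq]
    have hinj1 : Function.Injective f1 := by
      intro i i' h
      by_contra hne
      have hcc : Fin.castLE hle i ≠ Fin.castLE hle i' :=
        fun hc => hne (Fin.castLE_injective hle hc)
      have := congrFun h (Fin.castLE hle i)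
      rw [hf1] at this
      simp only [ev] at this
      rw [if_neg hcc, if_neg (hcl i)] at this
      norm_num at this
    have hinj2 : Function.Injective f2 := by
      intro i i' h
      by_contra hne
      have hcc : Fin.castLE hle i ≠ Fin.castLE hle i' :=
        fun hc => hne (Fin.castLE_injective hle hc)
      have := congrFun h (Fin.castLE hle i)
      rw [hf2] at this
      simp only [ev] at this
      rw [if_neg hcc, if_neg (hcl i)] at this
      norm_num at this
    have hd12 : Disjoint (Set.range f1) (Set.range f2) := by
      rw [Set.disjoint_left]
      rintro x ⟨i, rfl⟩ ⟨j, hj⟩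
      have := congrFun hj (Fin.castLE hle i)
      rw [hf1, hf2] at this
      simp only [ev] at this
      rw [if_neg (hcl i)] at this
      split_ifs at this <;> norm_num at this
    have hdz : Disjoint (Set.range f1 ∪ Set.range f2) {z} := by
      rw [Set.disjoint_singleton_right]
      rintro (⟨i, hi⟩ | ⟨i, hi⟩) <;>
      · have := congrFun hi l
        simp only [hf1, hf2, hz, stdBasis, Pi.add_apply, Pi.smul_apply, Pi.single_apply,
          smul_eq_mul] at this
        rw [if_neg (Ne.symm (hcl i))] at this
        norm_num at this
    have hr1 : (Set.range f1).ncard = d - 1 := by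
      rw [← Nat.card_coe_set_eq, Nat.card_range_of_injective hinj1,
        Nat.card_eq_fintype_card, Fintype.card_fin]
    have hr2 : (Set.range f2).ncard = d - 1 := by
      rw [← Nat.card_coe_set_eq, Nat.card_range_of_injective hinj2,
        Nat.card_eq_fintype_card, Fintype.card_fin]
    rw [Set.ncard_union_eq hdz ((Set.finite_range f1).union (Set.finite_range f2))
        (Set.finite_singleton z),
      Set.ncard_union_eq hd12 (Set.finite_range f1) (Set.finite_range f2),
      hr1, hr2, Set.ncard_singleton]
    omega

lemma aux_upper (d : ℕ) (hd : 2 ≤ d) (T : Set (Fin d → ℝ)) (hT : IsMSet (Fin d → ℝ) T) :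
    T.Finite ∧ T.ncard ≤ 2 * d - 1 := by
  classical
  obtain ⟨hT1, hT2⟩ := hT
  -- every element has a big coordinate
  have big : ∀ x ∈ T, ∃ j, 1 < |x j| := by
    intro x hx
    by_contra hc
    push_neg at hc
    have : ‖x‖ ≤ 1 := pi_norm_le_iff_of_nonneg (by norm_num) |>.2 fun i => by
      simpa [Real.norm_eq_abs] using hc i
    linarith [hT1 x hx]
  -- pairwise coordinate sum bounds
  have sb : ∀ x ∈ T, ∀ y ∈ T, x ≠ y → ∀ k, -2 ≤ x k + y k ∧ x k + y k ≤ 2 := by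
    intro x hx y hy hxy k
    have h := hT2 x hx y hy hxy
    have := norm_le_pi_norm (x + y) k
    rw [h] at this
    simp only [Pi.add_apply, Real.norm_eq_abs] at this
    constructor <;> linarith [abs_le.1 this]
  set F : (Fin d → ℝ) → Fin d × Bool := fun x =>
    if h : ∃ j, 1 < |x j| then (h.choose, if 0 < x h.choose then true else false)
    else (⟨0, by omega⟩, true) with hF
  -- spec of F on T
  have Fspec : ∀ x ∈ T, (((F x).2 = true → 1 < x (F x).1) ∧ ((F x).2 = false → x (F x).1 < -1)) := by
    intro x hx
    have h := big x hx
    have hc := h.choose_spec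
    rw [hF]
    simp only [dif_pos h]
    constructor <;> intro hcond
    · by_cases hp : 0 < x h.choose
      · rcases abs_cases (x h.choose) with ⟨e1, e2⟩ | ⟨e1, e2⟩ <;> rw [e1] at hc <;> linarith
      · simp [hp] at hcond
    · by_cases hp : 0 < x h.choose
      · simp [hp] at hcond
      · push_neg at hp
        rcases abs_cases (x h.choose) with ⟨e1, e2⟩ | ⟨e1, e2⟩ <;> rw [e1] at hc <;> linarith
  -- injectivity on T
  have Finj : Set.InjOn F T := by
    intro x hx y hy hxy
    by_contra hne
    obtain ⟨hx1, hx2⟩ := Fspec x hx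
    obtain ⟨hy1, hy2⟩ := Fspec y hy
    have hk : (F x).1 = (F y).1 := by rw [hxy]
    have hs : (F x).2 = (F y).2 := by rw [hxy]
    have hb := (sb x hx y hy hne ((F x).1))
    cases' Bool.eq_false_or_eq_true (F x).2 with h h
    · have h1 := hx1 h
      have h2 := hy1 (by rw [← hs]; exact h)
      rw [← hk] at h2
      linarith [hb.2]
    · have h1 := hx2 h
      have h2 := hy2 (by rw [← hs]; exact h)
      rw [← hk] at h2
      linarith [hb.1]
  have hfin : T.Finite := Set.Finite.of_finite_image (Set.toFinite (F '' T)) Finj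
  refine ⟨hfin, ?_⟩
  have hcard : T.ncard = (F '' T).ncard := (Set.ncard_image_of_injOn Finj).symm
  have hle : (F '' T).ncard ≤ 2 * d := by
    calc (F '' T).ncard ≤ (Set.univ : Set (Fin d × Bool)).ncard :=
          Set.ncard_le_ncard (Set.subset_univ _) Set.finite_univ
      _ = 2 * d := by simp [Set.ncard_univ, Nat.card_eq_fintype_card, mul_comm]
  by_contra hcon
  push_neg at hcon
  have h2d : T.ncard = 2 * d := by omega
  -- F '' T = univ
  have himg : F '' T = Set.univ := by
    apply Set.eq_of_subset_of_ncard_le (Set.subset_univ _)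
      (by rw [← hcard, h2d, Set.ncard_univ, Nat.card_eq_fintype_card]; simp [mul_comm])
      Set.finite_univ
  have surj : ∀ p : Fin d × Bool, ∃ x ∈ T, F x = p := by
    intro p
    have : p ∈ F '' T := by rw [himg]; trivial
    obtain ⟨x, hx, hfx⟩ := this
    exact ⟨x, hx, hfx⟩
  -- coordinate smallness away from claimed coordinates
  have small : ∀ x ∈ T, ∀ k, F x ≠ (k, true) → F x ≠ (k, false) → |x k| < 1 := by
    intro x hx k hkt hkf
    obtain ⟨a, ha, hfa⟩ := surj (k, true)
    obtain ⟨b, hb, hfb⟩ := surj (k, false)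
    have hxa : x ≠ a := fun h => hkt (h ▸ hfa)
    have hxb : x ≠ b := fun h => hkf (h ▸ hfb)
    have ha1 : 1 < a k := by
      have := (Fspec a ha).1
      rw [hfa] at this; exact this rfl
    have hb1 : b k < -1 := by
      have := (Fspec b hb).2
      rw [hfb] at this; exact this rfl
    have h1 := (sb x hx a ha hxa k).2
    have h2 := (sb x hx b hb hxb k).1
    rw [abs_lt]; constructor <;> linarith
  -- the four key elements at coordinates 0 and 1
  set j0 : Fin d := ⟨0, by omega⟩
  set j1 : Fin d := ⟨1, by omega⟩
  have hj01 : j0 ≠ j1 := by simp [j0, j1, Fin.ext_iff]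
  obtain ⟨a0, ha0, hfa0⟩ := surj (j0, true)
  obtain ⟨b0, hb0, hfb0⟩ := surj (j0, false)
  obtain ⟨a1, ha1T, hfa1⟩ := surj (j1, true)
  obtain ⟨b1, hb1T, hfb1⟩ := surj (j1, false)
  have ha0j : 1 < a0 j0 := by have := (Fspec a0 ha0).1; rw [hfa0] at this; exact this rfl
  have hb0j : b0 j0 < -1 := by have := (Fspec b0 hb0).2; rw [hfb0] at this; exact this rfl
  have hab0 : a0 ≠ b0 := by
    intro h; rw [h] at hfa0; rw [hfa0] at hfb0; simp at hfb0
  -- the norm of a0+b0 is 2, attained at some coordinate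
  have hnorm : ‖a0 + b0‖ = 2 := hT2 a0 ha0 b0 hb0 hab0
  have hex : ∃ k, |a0 k + b0 k| = 2 := by
    by_contra hc
    push_neg at hc
    have : ‖a0 + b0‖ < 2 := pi_norm_lt_iff (by norm_num) |>.2 fun i => by
      simp only [Pi.add_apply, Real.norm_eq_abs]
      exact lt_of_le_of_ne (abs_le.2 ⟨(sb a0 ha0 b0 hb0 hab0 i).1, (sb a0 ha0 b0 hb0 hab0 i).2⟩) (hc i)
    linarith
  obtain ⟨k, hk⟩ := hex
  have hkj0 : k = j0 := by
    by_contra hkne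
    have h1 : |a0 k| < 1 := small a0 ha0 k
      (by rw [hfa0]; intro h; exact hkne (congrArg Prod.fst h).symm)
      (by rw [hfa0]; intro h; simpa using congrArg Prod.snd h)
    have h2 : |b0 k| < 1 := small b0 hb0 k
      (by rw [hfb0]; intro h; simpa using congrArg Prod.snd h)
      (by rw [hfb0]; intro h; exact hkne (congrArg Prod.fst h).symm)
    have := abs_add_le (a0 k) (b0 k)
    linarith [hk, h1, h2, abs_le.1 (le_of_lt h1), abs_le.1 (le_of_lt h2)]
  subst hkj0
  -- |a0 j0 + b0 j0| = 2
  have hb1a0 : b1 ≠ a0 := by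
    intro h; rw [h, hfa0] at hfb1; simpa using congrArg Prod.snd hfb1
  have hb1b0 : b1 ≠ b0 := by
    intro h; rw [h, hfb0] at hfb1; exact hj01 (congrArg Prod.fst hfb1)
  have ha1a0 : a1 ≠ a0 := by
    intro h; rw [h, hfa0] at hfa1; exact hj01 (congrArg Prod.fst hfa1)
  have ha1b0 : a1 ≠ b0 := by
    intro h; rw [h, hfb0] at hfa1; simpa using congrArg Prod.snd hfa1
  rcases abs_eq (by norm_num : (0:ℝ) ≤ 2) |>.1 hk with hpp | hpm
  · -- a0 j0 + b0 j0 = 2, so a0 j0 > 3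
    have ha03 : 3 < a0 j0 := by linarith
    have h1 := (sb a1 ha1T a0 ha0 ha1a0 j0).2
    have h2 := (sb a1 ha1T b0 hb0 ha1b0 j0).1
    linarith
  · -- a0 j0 + b0 j0 = -2, so b0 j0 < -3
    have hb03 : b0 j0 < -3 := by linarith
    have h1 := (sb b1 hb1T b0 hb0 hb1b0 j0).1
    have h2 := (sb b1 hb1T a0 ha0 hb1a0 j0).2
    linarith

theorem mset_sup_norm_explicit (d : ℕ) (hd : 2 ≤ d) :
    IsMSet (Fin d → ℝ)
      {x | (∃ i : Fin d, (i : ℕ) < d - 1 ∧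
              x = (2 : ℝ) • stdBasis d i + stdBasis d ⟨d - 1, by omega⟩) ∨
           (∃ i : Fin d, (i : ℕ) < d - 1 ∧
              x = (-2 : ℝ) • stdBasis d i + stdBasis d ⟨d - 1, by omega⟩) ∨
           x = (-3 : ℝ) • stdBasis d ⟨d - 1, by omega⟩} ∧
    ({x | (∃ i : Fin d, (i : ℕ) < d - 1 ∧
              x = (2 : ℝ) • stdBasis d i + stdBasis d ⟨d - 1, by omega⟩) ∨
           (∃ i : Fin d, (i : ℕ) < d - 1 ∧
              x = (-2 : ℝ) • stdBasis d i + stdBasis d ⟨d - 1, by omega⟩) ∨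
           x = (-3 : ℝ) • stdBasis d ⟨d - 1, by omega⟩} : Set (Fin d → ℝ)).ncard = 2 * d - 1 ∧
    ∀ T : Set (Fin d → ℝ), IsMSet (Fin d → ℝ) T → T.Finite ∧ T.ncard ≤ 2 * d - 1 := by
  exact ⟨(main_aux d hd ⟨d - 1, by omega⟩ rfl).1, (main_aux d hd ⟨d - 1, by omega⟩ rfl).2,
    aux_upper d hd⟩
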